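/- Let m ≥ 2 and i be integers with gcd(i,m) = gcd(i+2,m) = 1. The number of lattice points (k,ℓ) ∈ ℤ² lying strictly inside the triangle with vertices (i,0), (i+2,0), and (0,m) is exactly m−1. -/

import Mathlib

open Finset


lemma halfplane_interior (a b c : ℝ) (hab : a ≠ 0 ∨ b ≠ 0) :
    interior {p : ℝ × ℝ | a * p.1 + b * p.2 ≤ c} = {p | a * p.1 + b * p.2 < c} := by
  let f : ℝ × ℝ →L[ℝ] ℝ := a • ContinuousLinearMap.fst ℝ ℝ ℝ + b • ContinuousLinearMap.snd ℝ ℝ ℝ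
  have hf : ∀ p : ℝ × ℝ, f p = a * p.1 + b * p.2 := by intro p; simp [f]
  have hsurj : Function.Surjective f := by
    intro r
    rcases hab with ha | hb
    · exact ⟨(r / a, 0), by simp [hf]; field_simp⟩
    · exact ⟨(0, r / b), by simp [hf]; field_simp⟩
  have : {p : ℝ × ℝ | a * p.1 + b * p.2 ≤ c} = f ⁻¹' Set.Iic c := by
    ext p; simp [hf]
  rw [this, f.interior_preimage hsurj, interior_Iic]
  ext p; simp [hf]

lemma convex_hp (a b c : ℝ) : Convex ℝ {p : ℝ × ℝ | a * p.1 + b * p.2 ≤ c} := by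
  apply convex_halfSpace_le (f := fun p : ℝ × ℝ => a * p.1 + b * p.2)
  constructor
  · intro p q; simp; ring
  · intro r p; simp; ring

lemma tri_interior (m i : ℤ) (hm : 2 ≤ m) (x y : ℝ) :
    (x, y) ∈ interior (convexHull ℝ
        ({((i : ℝ), (0 : ℝ)), ((i : ℝ) + 2, (0 : ℝ)), ((0 : ℝ), (m : ℝ))} : Set (ℝ × ℝ))) ↔
    0 < y ∧ (i : ℝ) * ((m : ℝ) - y) < m * x ∧ (m : ℝ) * x < ((i : ℝ) + 2) * ((m : ℝ) - y) := by
  have hm0 : (0 : ℝ) < (m : ℝ) := by exact_mod_cast (by omega : (0:ℤ) < m)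
  set A : ℝ × ℝ := ((i : ℝ), 0) with hA'
  set B : ℝ × ℝ := ((i : ℝ) + 2, 0) with hB'
  set C : ℝ × ℝ := ((0 : ℝ), (m : ℝ)) with hC'
  constructor
  · intro hx
    have key : ∀ a b c : ℝ, (a ≠ 0 ∨ b ≠ 0) →
        a * A.1 + b * A.2 ≤ c → a * B.1 + b * B.2 ≤ c → a * C.1 + b * C.2 ≤ c →
        a * x + b * y < c := by
      intro a b c hab hA hB hC
      have hsub : ({A, B, C} : Set (ℝ × ℝ)) ⊆ {p : ℝ × ℝ | a * p.1 + b * p.2 ≤ c} := by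
        intro p hp
        rcases hp with rfl | rfl | rfl <;> assumption
      have := interior_mono (convexHull_min hsub (convex_hp a b c)) hx
      rw [halfplane_interior a b c hab] at this
      exact this
    refine ⟨?_, ?_, ?_⟩
    · have := key 0 (-1) 0 (Or.inr (by norm_num)) (by simp [hA']) (by simp [hB']) (by simp [hC']; linarith)
      linarith
    · have := key (-(m:ℝ)) (-(i:ℝ)) (-(i:ℝ)*m) (Or.inl (by intro h; rw [neg_eq_zero] at h; linarith))
        (by simp [hA']; try nlinarith) (by simp [hB']; try nlinarith) (by simp [hC']; try nlinarith)
      nlinarith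
    · have := key (m:ℝ) ((i:ℝ)+2) (((i:ℝ)+2)*m) (Or.inl (by positivity))
        (by simp [hA']; try nlinarith) (by simp [hB']; try nlinarith) (by simp [hC']; try nlinarith)
      nlinarith
  · rintro ⟨hy, hl, hr⟩
    set T : Set (ℝ × ℝ) := {p | 0 < p.2 ∧ (i:ℝ)*((m:ℝ) - p.2) < m*p.1 ∧ (m:ℝ)*p.1 < ((i:ℝ)+2)*((m:ℝ) - p.2)} with hT'
    have hopen : IsOpen T := by
      have h1 : IsOpen {p : ℝ × ℝ | 0 < p.2} := isOpen_lt continuous_const continuous_snd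
      have h2 : IsOpen {p : ℝ × ℝ | (i:ℝ)*((m:ℝ) - p.2) < m*p.1} := isOpen_lt (by fun_prop) (by fun_prop)
      have h3 : IsOpen {p : ℝ × ℝ | (m:ℝ)*p.1 < ((i:ℝ)+2)*((m:ℝ) - p.2)} := isOpen_lt (by fun_prop) (by fun_prop)
      have : T = {p : ℝ × ℝ | 0 < p.2} ∩ {p : ℝ × ℝ | (i:ℝ)*((m:ℝ) - p.2) < m*p.1} ∩ {p : ℝ × ℝ | (m:ℝ)*p.1 < ((i:ℝ)+2)*((m:ℝ) - p.2)} := by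
        ext p; simp [hT', and_assoc]
      rw [this]; exact (h1.inter h2).inter h3
    have hsub : T ⊆ convexHull ℝ ({A, B, C} : Set (ℝ × ℝ)) := by
      rintro ⟨px, py⟩ ⟨hy, hl, hr⟩
      simp only at hy hl hr
      set a : ℝ := (((i:ℝ)+2)*((m:ℝ) - py) - m*px)/(2*m) with ha'
      set b : ℝ := ((m:ℝ)*px - i*((m:ℝ) - py))/(2*m) with hb'
      set c : ℝ := py/m with hc'
      have hm' : (m:ℝ) ≠ 0 := ne_of_gt hm0
      have hsum : ∑ j : Fin 3, (![a, b, c] j) • (![A, B, C] j) = (px, py) := by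
        simp [Fin.sum_univ_three, hA', hB', hC', Prod.ext_iff, Prod.smul_mk]
        constructor
        · rw [ha', hb']
          field_simp
          ring
        · rw [hc']
          field_simp
      rw [← hsum]
      apply (convex_convexHull ℝ _).sum_mem
      · intro j _
        fin_cases j <;> simp only [Matrix.cons_val_zero, Matrix.cons_val_one, Matrix.head_cons, Matrix.cons_val_two, Matrix.tail_cons, ha', hb', hc']
        · exact div_nonneg (by linarith) (by linarith)
        · exact div_nonneg (by linarith) (by linarith)
        · exact div_nonneg (by linarith) (by linarith)
      · simp [Fin.sum_univ_three, ha', hb', hc']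
        field_simp
        ring
      · intro j _
        fin_cases j <;> exact subset_convexHull ℝ _ (by simp)
    have : (x, y) ∈ T := ⟨hy, hl, hr⟩
    exact interior_maximal hsub hopen this


lemma ndvd_of_coprime (m j t : ℤ) (hm : 0 < m) (hj : Int.gcd j m = 1)
    (ht0 : 0 < t) (htm : t < m) : ¬ m ∣ j * t := by
  intro h
  have hco : IsCoprime m j := (Int.isCoprime_iff_gcd_eq_one.mpr hj).symm
  have : m ∣ t := hco.dvd_of_dvd_mul_left h
  have := Int.le_of_dvd ht0 this
  omega

lemma sum_emod_eq (m j : ℤ) (hm : 0 < m) (hj : Int.gcd j m = 1) :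
    ∑ t ∈ Ioo (0:ℤ) m, (j * t) % m = ∑ t ∈ Ioo (0:ℤ) m, t := by
  have hmaps : ∀ t ∈ Ioo (0:ℤ) m, (j * t) % m ∈ Ioo (0:ℤ) m := by
    intro t ht
    simp only [mem_Ioo] at ht ⊢
    have h1 : 0 ≤ (j * t) % m := Int.emod_nonneg _ (by omega)
    have h2 : (j * t) % m < m := Int.emod_lt_of_pos _ hm
    have h3 : (j * t) % m ≠ 0 := by
      intro h0
      exact ndvd_of_coprime m j t hm hj ht.1 ht.2 (Int.dvd_of_emod_eq_zero h0)
    omega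
  have hinj : Set.InjOn (fun t => (j * t) % m) ↑(Ioo (0:ℤ) m) := by
    intro t ht t' ht' h
    simp only [coe_Ioo, Set.mem_Ioo] at ht ht'
    have hmod : m ∣ j * t' - j * t := Int.ModEq.dvd (h : _ % m = _ % m)
    have : m ∣ j * (t' - t) := by rw [mul_sub]; exact hmod
    have hco : IsCoprime m j := (Int.isCoprime_iff_gcd_eq_one.mpr hj).symm
    have hdvd : m ∣ t' - t := hco.dvd_of_dvd_mul_left this
    have : t' - t = 0 := Int.eq_zero_of_abs_lt_dvd hdvd (by rw [abs_lt]; omega)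
    omega
  have himg : image (fun t => (j * t) % m) (Ioo (0:ℤ) m) = Ioo (0:ℤ) m := by
    apply Finset.eq_of_subset_of_card_le
    · intro r hr
      obtain ⟨t, ht, rfl⟩ := Finset.mem_image.mp hr
      exact hmaps t ht
    · rw [Finset.card_image_of_injOn hinj]
  have := Finset.sum_image (s := Ioo (0:ℤ) m) (g := fun t => (j * t) % m) (f := fun r => r)
    (fun x hx y hy h => hinj hx hy h)
  rw [himg] at this
  exact this.symm

lemma sum_refl (m : ℤ) (f : ℤ → ℤ) :
    ∑ t ∈ Ioo (0:ℤ) m, f t = ∑ t ∈ Ioo (0:ℤ) m, f (m - t) := by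
  apply Finset.sum_nbij' (i := fun t => m - t) (j := fun t => m - t) <;>
    intros <;> simp_all [mem_Ioo] <;> omega

lemma two_sum_Ioo (m : ℤ) (hm : 0 < m) :
    2 * ∑ t ∈ Ioo (0:ℤ) m, t = m * (m - 1) := by
  have h := sum_refl m id
  simp only [id] at h
  have hcard : (Ioo (0:ℤ) m).card = (m - 1).toNat := by rw [Int.card_Ioo]; norm_num
  have : ∑ t ∈ Ioo (0:ℤ) m, t + ∑ t ∈ Ioo (0:ℤ) m, (m - t) = ∑ t ∈ Ioo (0:ℤ) m, m := by
    rw [← Finset.sum_add_distrib]; apply Finset.sum_congr rfl; intros; ring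
  rw [Finset.sum_const, hcard] at this
  have hsm : ((m-1).toNat : ℤ) = m - 1 := Int.toNat_of_nonneg (by omega)
  nlinarith [h, this, hsm, nsmul_eq_mul ((m-1).toNat) m]

lemma sum_div_diff (m i : ℤ) (hm : 0 < m) (h1 : Int.gcd i m = 1) (h2 : Int.gcd (i + 2) m = 1) :
    ∑ t ∈ Ioo (0:ℤ) m, ((i + 2) * t / m - i * t / m) = m - 1 := by
  have key : ∀ j : ℤ, Int.gcd j m = 1 →
      m * ∑ t ∈ Ioo (0:ℤ) m, (j * t / m) = j * (∑ t ∈ Ioo (0:ℤ) m, t) - ∑ t ∈ Ioo (0:ℤ) m, t := by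
    intro j hj
    calc m * ∑ t ∈ Ioo (0:ℤ) m, (j * t / m)
        = ∑ t ∈ Ioo (0:ℤ) m, (j * t - (j * t) % m) := by
          rw [Finset.mul_sum]
          apply Finset.sum_congr rfl
          intro t _
          have := Int.mul_ediv_add_emod (j * t) m
          linarith
      _ = ∑ t ∈ Ioo (0:ℤ) m, j * t - ∑ t ∈ Ioo (0:ℤ) m, (j * t) % m := Finset.sum_sub_distrib _ _
      _ = j * (∑ t ∈ Ioo (0:ℤ) m, t) - ∑ t ∈ Ioo (0:ℤ) m, t := by
          rw [← Finset.mul_sum, sum_emod_eq m j hm hj]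
  have hD : m * ∑ t ∈ Ioo (0:ℤ) m, ((i + 2) * t / m - i * t / m) = m * (m - 1) := by
    rw [Finset.mul_sum]
    have : ∀ t ∈ Ioo (0:ℤ) m, m * ((i + 2) * t / m - i * t / m) = m * ((i+2)*t/m) - m * (i*t/m) := by
      intros; ring
    rw [Finset.sum_congr rfl this, Finset.sum_sub_distrib, ← Finset.mul_sum, ← Finset.mul_sum,
      key _ h2, key _ h1, ← two_sum_Ioo m hm]
    ring
  exact mul_left_cancel₀ (show (m:ℤ) ≠ 0 by omega) hD


lemma ndvd_of_coprime' (m j t : ℤ) (hj : Int.gcd j m = 1)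
    (ht0 : 0 < t) (htm : t < m) : ¬ m ∣ j * t := by
  intro h
  have hco : IsCoprime m j := (Int.isCoprime_iff_gcd_eq_one.mpr hj).symm
  have : m ∣ t := hco.dvd_of_dvd_mul_left h
  have := Int.le_of_dvd ht0 this
  omega

lemma row_iff (m i : ℤ) (hm0 : 0 < m) (h2 : Int.gcd (i + 2) m = 1) (k l : ℤ) (hl : 0 < l) :
    (i * (m - l) < m * k ∧ m * k < (i + 2) * (m - l)) ↔
    (l < m ∧ i * (m - l) / m + 1 ≤ k ∧ k ≤ (i + 2) * (m - l) / m) := by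
  constructor
  · rintro ⟨ha, hb⟩
    have hlm : l < m := by nlinarith [lt_trans ha hb]
    refine ⟨hlm, ?_, ?_⟩
    · have : i * (m - l) / m < k := (Int.ediv_lt_iff_lt_mul hm0).mpr (by linarith [ha])
      omega
    · exact (Int.le_ediv_iff_mul_le hm0).mpr (by linarith [hb])
  · rintro ⟨hlm, ha, hb⟩
    constructor
    · have : i * (m - l) / m < k := by omega
      have := (Int.ediv_lt_iff_lt_mul hm0).mp this
      linarith
    · have hle : k * m ≤ (i + 2) * (m - l) := (Int.le_ediv_iff_mul_le hm0).mp hb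
      have hne : k * m ≠ (i + 2) * (m - l) := by
        intro he
        exact ndvd_of_coprime' m (i + 2) (m - l) h2 (by omega) (by omega) ⟨k, by linarith [he]⟩
      have : k * m < (i + 2) * (m - l) := lt_of_le_of_ne hle hne
      linarith

theorem stmt_9 (m i : ℤ) (hm : 2 ≤ m)
    (h1 : Int.gcd i m = 1) (h2 : Int.gcd (i + 2) m = 1) :
    (Set.ncard {p : ℤ × ℤ |
        ((p.1 : ℝ), (p.2 : ℝ)) ∈ interior (convexHull ℝ
          ({((i : ℝ), (0 : ℝ)), ((i : ℝ) + 2, (0 : ℝ)), ((0 : ℝ), (m : ℝ))} : Set (ℝ × ℝ)))}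
      : ℤ) = m - 1 := by
  classical
  have tri := tri_interior m i hm
  have rowiff := fun k l hl => row_iff m i (by omega) h2 k l hl
  have sumdiff := sum_div_diff m i (by omega) h1 h2
  have sumrefl := sum_refl m
  have hm0 : (0:ℤ) < m := by omega
  set F : Finset (ℤ × ℤ) := (Finset.Ioo (0:ℤ) m).biUnion
    (fun l => (Finset.Icc (i*(m-l)/m + 1) ((i+2)*(m-l)/m)).image (fun k => (k, l))) with hF
  have hmemF : ∀ k l : ℤ, ((k, l) ∈ F ↔
      (0 < l ∧ l < m) ∧ (i*(m-l)/m + 1 ≤ k ∧ k ≤ (i+2)*(m-l)/m)) := by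
    intro k l
    simp only [hF, Finset.mem_biUnion, Finset.mem_image, Finset.mem_Icc, Finset.mem_Ioo]
    constructor
    · rintro ⟨l', hl', k', hk', he⟩
      obtain ⟨rfl, rfl⟩ : k' = k ∧ l' = l := by
        exact ⟨congrArg Prod.fst he, congrArg Prod.snd he⟩
      exact ⟨hl', hk'⟩
    · rintro ⟨hl, hk⟩
      exact ⟨l, hl, k, hk, rfl⟩
  have hset : {p : ℤ × ℤ |
        ((p.1 : ℝ), (p.2 : ℝ)) ∈ interior (convexHull ℝ
          ({((i : ℝ), (0 : ℝ)), ((i : ℝ) + 2, (0 : ℝ)), ((0 : ℝ), (m : ℝ))} : Set (ℝ × ℝ)))}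
      = ↑F := by
    ext ⟨k, l⟩
    simp only [Set.mem_setOf_eq, Finset.coe_sort_coe, Finset.mem_coe]
    rw [tri (k:ℝ) (l:ℝ), hmemF k l]
    constructor
    · rintro ⟨hy, ha, hb⟩
      have hy' : 0 < l := by exact_mod_cast hy
      have ha' : i * (m - l) < m * k := by exact_mod_cast ha
      have hb' : m * k < (i + 2) * (m - l) := by exact_mod_cast hb
      obtain ⟨hlm, hk⟩ := (rowiff k l hy').mp ⟨ha', hb'⟩
      exact ⟨⟨hy', hlm⟩, hk⟩
    · rintro ⟨⟨hl0, hlm⟩, hk⟩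
      obtain ⟨ha', hb'⟩ := (rowiff k l hl0).mpr ⟨hlm, hk⟩
      refine ⟨by exact_mod_cast hl0, by exact_mod_cast ha', by exact_mod_cast hb'⟩
  rw [hset, Set.ncard_coe_finset]
  have hcard : F.card = ∑ l ∈ Finset.Ioo (0:ℤ) m,
      (Finset.Icc (i*(m-l)/m + 1) ((i+2)*(m-l)/m)).card := by
    rw [hF]
    rw [Finset.card_biUnion]
    · apply Finset.sum_congr rfl
      intro l _
      exact Finset.card_image_of_injective _ (fun a b h => congrArg Prod.fst h)
    · intro x hx y hy hxy
      simp only [Finset.disjoint_left, Finset.mem_image]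
      rintro p ⟨k1, _, rfl⟩ ⟨k2, _, he⟩
      exact hxy (congrArg Prod.snd he).symm
  have hterm : ∀ l ∈ Finset.Ioo (0:ℤ) m,
      ((Finset.Icc (i*(m-l)/m + 1) ((i+2)*(m-l)/m)).card : ℤ)
        = (i+2)*(m-l)/m - i*(m-l)/m := by
    intro l hl
    rw [Finset.mem_Ioo] at hl
    have hab : i*(m-l)/m ≤ (i+2)*(m-l)/m :=
      Int.ediv_le_ediv hm0 (by nlinarith [hl.1, hl.2])
    rw [Int.card_Icc]
    rw [Int.toNat_of_nonneg (by omega)]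
    ring
  have : (F.card : ℤ) = ∑ l ∈ Finset.Ioo (0:ℤ) m, ((i+2)*(m-l)/m - i*(m-l)/m) := by
    rw [hcard]
    push_cast
    exact Finset.sum_congr rfl hterm
  rw [this, ← sumrefl (fun t => (i+2)*t/m - i*t/m)]
  exact sumdiff
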